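/- If λ ≥ α and y₁₀ > 0, then f has a unique root x* in (0, x₂₀) and f'(x*) ≥ 0 at that root. -/

import Mathlib

open Real Set

theorem f_unique_root
    (lam al p θ x10 x20 y10 : ℝ)
    (hlam : 0 < lam) (hal : 0 < al) (hla : al ≤ lam)
    (hp : p ∈ Set.Icc (0:ℝ) 1) (hθ : θ ∈ Set.Icc (0:ℝ) 1)
    (hx10 : 0 < x10) (hx20 : 0 < x20) (hy10 : 0 < y10)
    (hsum : x10 + x20 + y10 ≤ 1)
    (f : ℝ → ℝ)
    (hf : ∀ x, f x = y10 + (1 + p) * x10 * (1 - (x / x20) ^ (lam / al))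
        + (x20 - x) + ((lam - al) * θ + al) / al * Real.log (x / x20)) :
    (∃! x, x ∈ Set.Ioo (0:ℝ) x20 ∧ f x = 0) ∧
    ∀ x ∈ Set.Ioo (0:ℝ) x20, f x = 0 → 0 ≤ deriv f x := by
  obtain ⟨hp0, hp1⟩ := hp
  obtain ⟨hθ0, hθ1⟩ := hθ
  set c := ((lam - al) * θ + al) / al with hcdef
  set q := lam / al with hqdef
  set K := (1 + p) * x10 with hKdef
  have hfe : f = fun x => y10 + K * (1 - (x / x20) ^ q)
      + (x20 - x) + c * Real.log (x / x20) := funext hf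
  have hc1 : (1:ℝ) ≤ c := by
    rw [hcdef, le_div_iff₀ hal]
    nlinarith
  have hc0 : (0:ℝ) < c := lt_of_lt_of_le one_pos hc1
  have hq1 : (1:ℝ) ≤ q := (one_le_div hal).2 hla
  have hq0 : (0:ℝ) < q := lt_of_lt_of_le one_pos hq1
  have hK0 : (0:ℝ) < K := mul_pos (by linarith) hx10
  have hK2 : K ≤ 2 * x10 := by nlinarith
  -- the auxiliary functions
  set D : ℝ → ℝ := fun x => c / x - 1 - K * ((q * (x / x20) ^ (q - 1)) * (1 / x20)) with hDdef
  set g : ℝ → ℝ := fun x => c - x - K * q * (x / x20) ^ q with hgdef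
  -- derivative
  have hderiv : ∀ x : ℝ, 0 < x → HasDerivAt f (D x) x := by
    intro x hx
    have hxx : x / x20 ≠ 0 := ne_of_gt (div_pos hx hx20)
    have h1 : HasDerivAt (fun y : ℝ => y / x20) (1 / x20) x := by
      simpa using (hasDerivAt_id x).div_const x20
    have h2 : HasDerivAt (fun y : ℝ => (y / x20) ^ q)
        ((q * (x / x20) ^ (q - 1)) * (1 / x20)) x :=
      by have h := (Real.hasDerivAt_rpow_const (p := q) (Or.inl hxx)).comp x h1; exact h
    have h3 : HasDerivAt (fun y : ℝ => Real.log (y / x20)) ((x / x20)⁻¹ * (1 / x20)) x :=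
      by have h := (Real.hasDerivAt_log hxx).comp x h1; exact h
    have h4 : HasDerivAt f
        (0 + K * (0 - (q * (x / x20) ^ (q - 1)) * (1 / x20)) + (0 - 1)
          + c * ((x / x20)⁻¹ * (1 / x20))) x := by
      rw [hfe]
      exact (((hasDerivAt_const x y10).add
        (((hasDerivAt_const x 1).sub h2).const_mul K)).add
        ((hasDerivAt_const x x20).sub (hasDerivAt_id x))).add (h3.const_mul c)
    convert h4 using 1
    rw [hDdef]
    field_simp
    ring
  -- relation D = g / x
  have hDg : ∀ x : ℝ, 0 < x → D x = g x / x := by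
    intro x hx
    have hxx : x / x20 ≠ 0 := ne_of_gt (div_pos hx hx20)
    have hrp : (x / x20) ^ q = (x / x20) ^ (q - 1) * (x / x20) := by
      rw [← Real.rpow_add_one hxx (q - 1)]
      ring_nf
    rw [hDdef, hgdef]
    simp only
    rw [hrp]
    field_simp
  -- g strictly decreasing
  have hgmono : ∀ a b : ℝ, 0 < a → a < b → g b < g a := by
    intro a b ha hab
    have h1 : (a / x20) ^ q < (b / x20) ^ q := by
      apply Real.rpow_lt_rpow (by positivity) _ hq0
      gcongr
    rw [hgdef]
    simp only
    nlinarith [mul_pos hK0 hq0]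
  -- continuity on (0, ∞)
  have hcont : ContinuousOn f (Set.Ioi (0:ℝ)) := by
    rw [hfe]
    have hbase : ContinuousOn (fun y : ℝ => y / x20) (Set.Ioi (0:ℝ)) :=
      (continuous_id.div_const _).continuousOn
    have h2 : ContinuousOn (fun y : ℝ => (y / x20) ^ q) (Set.Ioi (0:ℝ)) :=
      hbase.rpow_const (fun y hy => Or.inl (ne_of_gt (div_pos hy hx20)))
    have h3 : ContinuousOn (fun y : ℝ => Real.log (y / x20)) (Set.Ioi (0:ℝ)) :=
      hbase.log (fun y hy => ne_of_gt (div_pos hy hx20))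
    exact ((continuousOn_const.add
      (continuousOn_const.mul (continuousOn_const.sub h2))).add
      (continuousOn_const.sub continuousOn_id)).add (continuousOn_const.mul h3)
  have hfx20 : f x20 = y10 := by
    rw [hf]
    rw [div_self (ne_of_gt hx20), Real.one_rpow, Real.log_one]
    ring
  -- key lemma: at any root in (0, x20), g is nonnegative
  have hA : ∀ x ∈ Set.Ioo (0:ℝ) x20, f x = 0 → 0 ≤ g x := by
    intro x hx hroot
    by_contra hneg
    push_neg at hneg
    have hsub : Set.Icc x x20 ⊆ Set.Ioi (0:ℝ) :=
      fun y hy => lt_of_lt_of_le hx.1 hy.1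
    have hanti : StrictAntiOn f (Set.Icc x x20) := by
      apply strictAntiOn_of_deriv_neg (convex_Icc x x20) (hcont.mono hsub)
      intro y hy
      rw [interior_Icc] at hy
      have hy0 : 0 < y := lt_trans hx.1 hy.1
      rw [(hderiv y hy0).deriv, hDg y hy0]
      apply div_neg_of_neg_of_pos _ hy0
      exact lt_trans (hgmono x y hx.1 hy.1) hneg
    have := hanti (Set.left_mem_Icc.2 (le_of_lt hx.2))
      (Set.right_mem_Icc.2 (le_of_lt hx.2)) hx.2
    rw [hroot, hfx20] at this
    linarith
  -- any two roots coincide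
  have hNoTwo : ∀ a b : ℝ, a ∈ Set.Ioo (0:ℝ) x20 → b ∈ Set.Ioo (0:ℝ) x20 →
      f a = 0 → f b = 0 → ¬ a < b := by
    intro a b ha hb hfa hfb hab
    have hgb : 0 ≤ g b := hA b hb hfb
    have hsub : Set.Icc a b ⊆ Set.Ioi (0:ℝ) :=
      fun y hy => lt_of_lt_of_le ha.1 hy.1
    have hmono : StrictMonoOn f (Set.Icc a b) := by
      apply strictMonoOn_of_deriv_pos (convex_Icc a b) (hcont.mono hsub)
      intro y hy
      rw [interior_Icc] at hy
      have hy0 : 0 < y := lt_trans ha.1 hy.1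
      rw [(hderiv y hy0).deriv, hDg y hy0]
      apply div_pos _ hy0
      exact lt_of_le_of_lt hgb (hgmono y b hy0 hy.2)
    have := hmono (Set.left_mem_Icc.2 (le_of_lt hab))
      (Set.right_mem_Icc.2 (le_of_lt hab)) hab
    rw [hfa, hfb] at this
    exact lt_irrefl 0 this
  -- existence: a point where f is negative
  set M : ℝ := y10 + 2 * x10 + x20 + 1 with hMdef
  have hM0 : 0 < M := by positivity
  set x0 : ℝ := x20 * Real.exp (-M / c) with hx0def
  have hx00 : 0 < x0 := mul_pos hx20 (Real.exp_pos _)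
  have hx0lt : x0 < x20 := by
    have he : Real.exp (-M / c) < 1 := by
      rw [Real.exp_lt_one_iff]
      exact div_neg_of_neg_of_pos (by linarith) hc0
    calc x0 = x20 * Real.exp (-M / c) := rfl
    _ < x20 * 1 := by exact mul_lt_mul_of_pos_left he hx20
    _ = x20 := mul_one x20
  have hlog : Real.log (x0 / x20) = -M / c := by
    rw [hx0def, mul_comm, mul_div_assoc, div_self (ne_of_gt hx20), mul_one, Real.log_exp]
  have hfx0 : f x0 < 0 := by
    rw [hf, hlog]
    have hcc : c * (-M / c) = -M := by field_simp
    have ht : (0:ℝ) ≤ (x0 / x20) ^ q := Real.rpow_nonneg (by positivity) q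
    rw [hcc]
    nlinarith
  obtain ⟨xs, hxs, hfxs⟩ :=
    intermediate_value_Ioo (le_of_lt hx0lt)
      (hcont.mono (fun y hy => lt_of_lt_of_le hx00 hy.1))
      (Set.mem_Ioo.2 ⟨hfx0, by rw [hfx20]; exact hy10⟩)
  have hxsIoo : xs ∈ Set.Ioo (0:ℝ) x20 := ⟨lt_trans hx00 hxs.1, hxs.2⟩
  constructor
  · refine ⟨xs, ⟨hxsIoo, hfxs⟩, ?_⟩
    rintro y ⟨hy, hfy⟩
    rcases lt_trichotomy y xs with h | h | h
    · exact absurd h (hNoTwo y xs hy hxsIoo hfy hfxs)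
    · exact h
    · exact absurd h (hNoTwo xs y hxsIoo hy hfxs hfy)
  · intro x hx hroot
    rw [(hderiv x hx.1).deriv, hDg x hx.1]
    exact div_nonneg (hA x hx hroot) (le_of_lt hx.1)
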